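/- Suppose x > 0 is a real number satisfying x² ≤ A + B·x^p, where p ∈ (0,2) and A, B > 0 are real numbers such that B·(√A + 1/2)^p ≤ √A + 1/4. Then x ≤ √A + 1/2. -/
import Mathlib


open Real

/-- If x > 0 satisfies x² ≤ A + B x^p with p ∈ (0,2), A, B > 0 and
B(√A + 1/2)^p ≤ √A + 1/4, then x ≤ √A + 1/2. -/
theorem stmt_7 (x A B p : ℝ) (hx : 0 < x) (hp : 0 < p) (hp2 : p < 2)
    (hA : 0 < A) (hB : 0 < B)
    (hcond : B * (Real.sqrt A + 1 / 2) ^ p ≤ Real.sqrt A + 1 / 4)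
    (h : x ^ 2 ≤ A + B * x ^ p) :
    x ≤ Real.sqrt A + 1 / 2 := by
  set y := Real.sqrt A + 1 / 2 with hy
  have hsA : 0 ≤ Real.sqrt A := Real.sqrt_nonneg A
  have hy0 : 0 < y := by rw [hy]; linarith
  by_contra hxy
  push_neg at hxy
  have hsq : Real.sqrt A ^ 2 = A := Real.sq_sqrt hA.le
  have hy2 : y ^ 2 - A = Real.sqrt A + 1 / 4 := by rw [hy]; nlinarith [hsq]
  have hy2pos : 0 < y ^ 2 - A := by rw [hy2]; linarith
  have hxyd : 1 < x / y := (one_lt_div hy0).mpr hxy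
  have hxp : x ^ p = (x / y) ^ p * y ^ p := by
    rw [← Real.mul_rpow (by positivity) hy0.le, div_mul_cancel₀ _ hy0.ne']
  have hlt : (x / y) ^ p < (x / y) ^ (2 : ℝ) :=
    Real.rpow_lt_rpow_of_exponent_lt hxyd hp2
  have h2 : (x / y) ^ (2 : ℝ) = x ^ 2 / y ^ 2 := by
    rw [show (2:ℝ) = ((2:ℕ):ℝ) by norm_num, Real.rpow_natCast, div_pow]
  have hByp : B * y ^ p ≤ y ^ 2 - A := by rw [hy2]; exact hcond
  have hyp_pos : 0 < y ^ p := Real.rpow_pos_of_pos hy0 p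
  have hxyp_pos : 0 < (x / y) ^ p := Real.rpow_pos_of_pos (by positivity) p
  have hBx : B * x ^ p < (y ^ 2 - A) * (x ^ 2 / y ^ 2) := by
    rw [hxp]
    calc B * ((x / y) ^ p * y ^ p) = (B * y ^ p) * (x / y) ^ p := by ring
      _ ≤ (y ^ 2 - A) * (x / y) ^ p := by
          exact mul_le_mul_of_nonneg_right hByp hxyp_pos.le
      _ < (y ^ 2 - A) * (x ^ 2 / y ^ 2) := by
          rw [← h2]; exact (mul_lt_mul_iff_right₀ hy2pos).mpr hlt
  have hBx' : B * x ^ p * y ^ 2 < (y ^ 2 - A) * x ^ 2 := by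
    have := mul_lt_mul_of_pos_right hBx (by positivity : (0:ℝ) < y ^ 2)
    rw [show (y ^ 2 - A) * (x ^ 2 / y ^ 2) * y ^ 2 = (y ^ 2 - A) * x ^ 2 from by
      field_simp] at this
    linarith
  nlinarith [mul_le_mul_of_nonneg_right h (by positivity : (0:ℝ) ≤ y ^ 2),
    mul_pos hA (mul_pos (sub_pos.mpr hxy) (by linarith : (0:ℝ) < x + y))]
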